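/- Let 0 < α < 2, a ≠ 0, γ ∈ ℝ, and E > 0. Then there exist constants ε > 0, C > 0 and ξ* ≥ 1 such that for all ξ > ξ₀ > ξ*, |∫_{ξ₀}^{ξ} sin( a ∫₀^{s} √(1 - β_E(x)) dx + γ ) / s ds| ≤ C ξ₀^{-ε}. -/

import Mathlib

open Filter Set

set_option maxHeartbeats 1000000

/-- Proposition 2.1, part 1: For `0 < α < 2`, `a ≠ 0`, `γ ∈ ℝ` and `E > 0`,
with `c = (1+α/2)^{2/(2+α)}` and `β_E(x) = -E/(c^α x^{2α/(2+α)})`, there are `ε > 0`, `C > 0`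
and `ξ* ≥ 1` such that for all `ξ > ξ₀ > ξ*`,
`|∫_{ξ₀}^{ξ} sin(a ∫₀^s √(1-β_E(x)) dx + γ)/s ds| ≤ C ξ₀^{-ε}`. -/
theorem stmt4 (α : ℝ) (hα0 : 0 < α) (hα2 : α < 2)
    (a : ℝ) (ha : a ≠ 0) (γ : ℝ) (E : ℝ) (hE : 0 < E)
    (c : ℝ) (hc : c = (1 + α / 2) ^ ((2 : ℝ) / (2 + α)))
    (β : ℝ → ℝ) (hβ : ∀ x : ℝ, β x = -E / (c ^ α * x ^ (2 * α / (2 + α)))) :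
    ∃ ε > (0 : ℝ), ∃ C > (0 : ℝ), ∃ ξstar : ℝ, 1 ≤ ξstar ∧
      ∀ ξ₀ ξ : ℝ, ξstar < ξ₀ → ξ₀ < ξ →
        |∫ s in ξ₀..ξ,
            Real.sin (a * (∫ x in (0 : ℝ)..s, Real.sqrt (1 - β x)) + γ) / s|
          ≤ C * ξ₀ ^ (-ε) := by
  have h2α : (0:ℝ) < 2 + α := by linarith
  set p : ℝ := 2 * α / (2 + α) with hpdef
  have hp0 : 0 < p := div_pos (by linarith) h2α
  have hp1 : p < 1 := by rw [hpdef, div_lt_one h2α]; linarith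
  have hc0 : 0 < c := by rw [hc]; positivity
  have hca : 0 < c ^ α := Real.rpow_pos_of_pos hc0 α
  set K : ℝ := E / c ^ α with hKdef
  have hK : 0 < K := div_pos hE hca
  set g : ℝ → ℝ := fun s => Real.sqrt (1 + K * s ^ (-p)) with hgdef
  have hβf : β = fun x => -E / (c ^ α * x ^ p) := funext hβ
  -- the integrand of the inner integral
  set f : ℝ → ℝ := fun x => Real.sqrt (1 - β x) with hfdef
  have hfg : ∀ x : ℝ, 0 < x → f x = g x := by
    intro x hx
    have hxp : (0:ℝ) < x ^ p := Real.rpow_pos_of_pos hx p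
    simp only [hfdef, hgdef, hβ]
    congr 1
    rw [Real.rpow_neg hx.le, hKdef]
    field_simp
    ring
  have hw : ∀ s : ℝ, 0 < s → 0 < 1 + K * s ^ (-p) := by
    intro s hs
    have := Real.rpow_pos_of_pos hs (-p)
    nlinarith
  have hg1 : ∀ s : ℝ, 0 < s → 1 ≤ g s := by
    intro s hs
    have h1 : (0:ℝ) < s ^ (-p) := Real.rpow_pos_of_pos hs (-p)
    have := Real.sqrt_le_sqrt (show (1:ℝ) ≤ 1 + K * s ^ (-p) by nlinarith)
    rwa [Real.sqrt_one] at this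
  have hgpos : ∀ s : ℝ, 0 < s → 0 < g s := fun s hs => lt_of_lt_of_le one_pos (hg1 s hs)
  have hsple : ∀ s : ℝ, 1 ≤ s → s ^ (-p) ≤ 1 :=
    fun s hs => Real.rpow_le_one_of_one_le_of_nonpos hs (by linarith)
  have hgub : ∀ s : ℝ, 1 ≤ s → g s ≤ Real.sqrt (1 + K) := by
    intro s hs
    apply Real.sqrt_le_sqrt
    have := hsple s hs
    nlinarith
  -- derivative of g
  set gd : ℝ → ℝ := fun s => K * (-p * s ^ (-p - 1)) / (2 * g s) with hgddef
  have hgderiv : ∀ s : ℝ, 0 < s → HasDerivAt g (gd s) s := by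
    intro s hs
    have h1 : HasDerivAt (fun x : ℝ => x ^ (-p)) (-p * s ^ (-p - 1)) s :=
      Real.hasDerivAt_rpow_const (Or.inl hs.ne')
    have h2 : HasDerivAt (fun x : ℝ => 1 + K * x ^ (-p)) (K * (-p * s ^ (-p - 1))) s :=
      (h1.const_mul K).const_add 1
    exact h2.sqrt (hw s hs).ne'
  have hgdbound : ∀ s : ℝ, 1 ≤ s → |gd s| ≤ p * K / (2 * s) := by
    intro s hs
    have hs0 : (0:ℝ) < s := lt_of_lt_of_le one_pos hs
    have hsinv : (0:ℝ) < s⁻¹ := by positivity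
    have h1 : s ^ (-p - 1) ≤ s⁻¹ := by
      have he : s ^ (-p - 1) = s ^ (-p) * s⁻¹ := by
        rw [← Real.rpow_neg_one s, ← Real.rpow_add hs0]; ring_nf
      rw [he]
      nlinarith [mul_nonneg (sub_nonneg.mpr (hsple s hs)) hsinv.le]
    have h3 : (0:ℝ) < s ^ (-p - 1) := Real.rpow_pos_of_pos hs0 _
    have h4 : (1:ℝ) ≤ g s := hg1 s hs0
    have h8 : s ^ (-p - 1) * s ≤ 1 := by
      have := mul_le_mul_of_nonneg_right h1 hs0.le
      rwa [inv_mul_cancel₀ hs0.ne'] at this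
    have hpK : (0:ℝ) ≤ p * K := by positivity
    rw [hgddef, abs_div, abs_of_nonneg (by positivity : (0:ℝ) ≤ 2 * g s)]
    rw [div_le_div_iff₀ (by positivity) (by positivity)]
    have h5 : |K * (-p * s ^ (-p - 1))| = K * p * s ^ (-p - 1) := by
      rw [abs_of_nonpos (by nlinarith [mul_pos (mul_pos hK hp0) h3])]; ring
    rw [h5]
    nlinarith [mul_nonneg hpK (sub_nonneg.mpr h8), mul_nonneg hpK (sub_nonneg.mpr h4)]
  -- measurability and integrability of f
  have hfmeas : Measurable f := by
    rw [hfdef, hβf]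
    fun_prop
  have hfint : ∀ s : ℝ, 0 < s → IntervalIntegrable f MeasureTheory.volume 0 s := by
    intro s hs
    have hbound : IntervalIntegrable (fun x : ℝ => 1 + Real.sqrt K * x ^ (-(p/2)))
        MeasureTheory.volume 0 s :=
      intervalIntegrable_const.add
        ((intervalIntegral.intervalIntegrable_rpow' (by linarith)).const_mul _)
    rw [intervalIntegrable_iff_integrableOn_Ioc_of_le hs.le] at hbound ⊢
    apply hbound.mono' (hfmeas.aestronglyMeasurable.restrict)
    rw [MeasureTheory.ae_restrict_iff' measurableSet_Ioc]
    filter_upwards with x hx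
    have hx0 : 0 < x := hx.1
    have e1 : (Real.sqrt K * x ^ (-(p/2)))^2 = K * x ^ (-p) := by
      rw [mul_pow, Real.sq_sqrt hK.le]
      congr 1
      rw [← Real.rpow_natCast (x ^ (-(p/2))) 2, ← Real.rpow_mul hx0.le]
      norm_num
    have h2 : 0 ≤ Real.sqrt K * x ^ (-(p/2)) := by positivity
    have h3 : 1 + K * x ^ (-p) ≤ (1 + Real.sqrt K * x ^ (-(p/2)))^2 := by nlinarith
    have h4 := Real.sqrt_le_sqrt h3
    rw [Real.sqrt_sq (by positivity)] at h4
    rw [hfg x hx0, Real.norm_eq_abs, abs_of_nonneg (Real.sqrt_nonneg _)]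
    exact h4
  -- FTC for the inner integral
  have hF : ∀ s : ℝ, 0 < s → HasDerivAt (fun t => ∫ x in (0:ℝ)..t, f x) (f s) s := by
    intro s hs
    have hcont : ContinuousAt f s := by
      rw [hfdef]
      apply Real.continuous_sqrt.continuousAt.comp
      apply continuousAt_const.sub
      rw [hβf]
      apply ContinuousAt.div continuousAt_const
      · exact continuousAt_const.mul (Real.continuousAt_rpow_const s p (Or.inl hs.ne'))
      · have := Real.rpow_pos_of_pos hs p
        positivity
    exact intervalIntegral.integral_hasDerivAt_right (hfint s hs)
      (hfmeas.stronglyMeasurable.stronglyMeasurableAtFilter) hcont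
  set φ : ℝ → ℝ := fun s => a * (∫ x in (0:ℝ)..s, f x) + γ with hφdef
  have hφderiv : ∀ s : ℝ, 0 < s → HasDerivAt φ (a * g s) s := by
    intro s hs
    have := ((hF s hs).const_mul a).add_const γ
    rwa [hfg s hs] at this
  -- u, v and their derivatives
  set u : ℝ → ℝ := fun s => (a * (s * g s))⁻¹ with hudef
  set u' : ℝ → ℝ := fun s => -(a * (1 * g s + s * gd s)) / (a * (s * g s))^2 with hu'def
  set v : ℝ → ℝ := fun s => -Real.cos (φ s) with hvdef
  set v' : ℝ → ℝ := fun s => a * g s * Real.sin (φ s) with hv'def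
  have hne : ∀ s : ℝ, 0 < s → a * (s * g s) ≠ 0 := by
    intro s hs
    have := hgpos s hs
    positivity
  have huderiv : ∀ s : ℝ, 0 < s → HasDerivAt u (u' s) s := by
    intro s hs
    have h1 : HasDerivAt (fun t : ℝ => t * g t) (1 * g s + s * gd s) s :=
      (hasDerivAt_id s).mul (hgderiv s hs)
    exact (h1.const_mul a).inv (hne s hs)
  have hvderiv : ∀ s : ℝ, 0 < s → HasDerivAt v (v' s) s := by
    intro s hs
    have h1 := ((hφderiv s hs).cos).neg
    refine h1.congr_deriv ?_
    rw [hv'def]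
    ring
  -- continuity facts
  have hgcont : ∀ s : ℝ, 0 < s → ContinuousAt g s := by
    intro s hs
    apply Real.continuous_sqrt.continuousAt.comp
    exact (continuousAt_const.add
      ((Real.continuousAt_rpow_const s (-p) (Or.inl hs.ne')).const_mul K))
  have hgdcont : ∀ s : ℝ, 0 < s → ContinuousAt gd s := by
    intro s hs
    apply ContinuousAt.div
    · exact ((Real.continuousAt_rpow_const s (-p - 1) (Or.inl hs.ne')).const_mul (-p)).const_mul K
    · exact (hgcont s hs).const_mul 2
    · have := hgpos s hs; positivity
  have hu'cont : ∀ s : ℝ, 0 < s → ContinuousAt u' s := by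
    intro s hs
    apply ContinuousAt.div
    · exact (((continuousAt_const.mul (hgcont s hs)).add
        (continuousAt_id.mul (hgdcont s hs))).const_mul a).neg
    · exact ((continuousAt_id.mul (hgcont s hs)).const_mul a).pow 2
    · exact pow_ne_zero 2 (hne s hs)
  -- the constants
  set B : ℝ := Real.sqrt (1 + K) + p * K / 2 with hBdef
  have hB0 : 0 < B := by
    have := Real.sqrt_nonneg (1 + K)
    have : (0:ℝ) < p * K / 2 := by positivity
    positivity
  refine ⟨1, one_pos, (2 + B) / |a|, by positivity, 1, le_refl 1, ?_⟩
  intro ξ₀ ξ hξ₀ hξ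
  have hξ₀0 : (0:ℝ) < ξ₀ := lt_trans one_pos hξ₀
  have hξ0 : (0:ℝ) < ξ := lt_trans hξ₀0 hξ
  have hle : ξ₀ ≤ ξ := hξ.le
  have hIcc : uIcc ξ₀ ξ = Icc ξ₀ ξ := uIcc_of_le hle
  have hpos : ∀ s ∈ Icc ξ₀ ξ, 0 < s := fun s hs => lt_of_lt_of_le hξ₀0 hs.1
  have hone : ∀ s ∈ Icc ξ₀ ξ, 1 ≤ s := fun s hs => le_trans hξ₀.le hs.1
  -- rewrite the integrand
  have hEq : EqOn (fun s : ℝ => Real.sin (a * (∫ x in (0:ℝ)..s, f x) + γ) / s)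
      (fun s => u s * v' s) (uIcc ξ₀ ξ) := by
    intro s hs
    rw [hIcc] at hs
    have hs0 : 0 < s := hpos s hs
    have hgs : g s ≠ 0 := (hgpos s hs0).ne'
    simp only [hudef, hv'def, hφdef]
    field_simp
  rw [intervalIntegral.integral_congr hEq]
  -- integrability hypotheses for integration by parts
  have hu'int : IntervalIntegrable u' MeasureTheory.volume ξ₀ ξ := by
    apply ContinuousOn.intervalIntegrable
    rw [hIcc]
    exact fun s hs => ((hu'cont s (hpos s hs)).continuousWithinAt)
  have hv'int : IntervalIntegrable v' MeasureTheory.volume ξ₀ ξ := by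
    apply ContinuousOn.intervalIntegrable
    rw [hIcc]
    intro s hs
    have hs0 := hpos s hs
    apply ContinuousAt.continuousWithinAt
    exact ((hgcont s hs0).const_mul a).mul
      (Real.continuous_sin.continuousAt.comp (hφderiv s hs0).continuousAt)
  have hudall : ∀ s ∈ uIcc ξ₀ ξ, HasDerivAt u (u' s) s := by
    intro s hs; rw [hIcc] at hs; exact huderiv s (hpos s hs)
  have hvdall : ∀ s ∈ uIcc ξ₀ ξ, HasDerivAt v (v' s) s := by
    intro s hs; rw [hIcc] at hs; exact hvderiv s (hpos s hs)
  rw [intervalIntegral.integral_mul_deriv_eq_deriv_mul hudall hvdall hu'int hv'int]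
  -- bounds
  have hub : ∀ s ∈ Icc ξ₀ ξ, |u s| ≤ (|a| * ξ₀)⁻¹ := by
    intro s hs
    have hs0 := hpos s hs
    have hgs := hg1 s hs0
    have ha' : 0 < |a| := abs_pos.mpr ha
    have hgp := hgpos s hs0
    have h1 : |u s| = (|a| * (s * g s))⁻¹ := by
      rw [hudef, abs_inv, abs_mul, abs_of_pos (by positivity : (0:ℝ) < s * g s)]
    rw [h1]
    have h2 : |a| * ξ₀ ≤ |a| * (s * g s) := by
      nlinarith [mul_le_mul_of_nonneg_left hs.1 (abs_nonneg a),
        mul_le_mul_of_nonneg_left hgs (mul_nonneg (abs_nonneg a) hs0.le)]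
    exact inv_anti₀ (by positivity) h2
  have hvb : ∀ s : ℝ, |v s| ≤ 1 := by
    intro s; rw [hvdef, abs_neg]; exact Real.abs_cos_le_one _
  have hu'b : ∀ s ∈ Icc ξ₀ ξ, |u' s| ≤ B / |a| * (s^2)⁻¹ := by
    intro s hs
    have hs0 := hpos s hs
    have hs1 := hone s hs
    have hgs1 := hg1 s hs0
    have hgsub := hgub s hs1
    have hgdb := hgdbound s hs1
    have ha' : (0:ℝ) < |a| := abs_pos.mpr ha
    rw [hu'def, abs_div, abs_neg, abs_mul, abs_pow, sq_abs]
    have hnum : |1 * g s + s * gd s| ≤ B := by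
      rw [hBdef]
      have h1 : |s * gd s| ≤ p * K / 2 := by
        rw [abs_mul, abs_of_pos hs0]
        calc s * |gd s| ≤ s * (p * K / (2 * s)) := by nlinarith
          _ = p * K / 2 := by field_simp
      calc |1 * g s + s * gd s| ≤ |1 * g s| + |s * gd s| := abs_add_le _ _
        _ ≤ Real.sqrt (1 + K) + p * K / 2 := by
            rw [one_mul, abs_of_pos (hgpos s hs0)]; linarith
    have hden : a^2 * s^2 ≤ (a * (s * g s))^2 := by
      have hg2 : 1 ≤ (g s)^2 := by nlinarith
      nlinarith [mul_le_mul_of_nonneg_left hg2 (sq_nonneg (a*s))]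
    have hden0 : (0:ℝ) < a^2 * s^2 := by positivity
    calc |a| * |1 * g s + s * gd s| / (a * (s * g s))^2
        ≤ |a| * B / (a^2 * s^2) := by
          apply div_le_div₀ (by positivity) (by nlinarith) hden0 hden
      _ = B / |a| * (s^2)⁻¹ := by
          rw [show a^2 = |a|^2 from (sq_abs a).symm]
          have hane : (|a|:ℝ) ≠ 0 := ha'.ne'
          have hsne : (s:ℝ) ≠ 0 := hs0.ne'
          field_simp
  -- integral of the remainder term
  have hsqint : IntervalIntegrable (fun s : ℝ => B / |a| * (s^2)⁻¹) MeasureTheory.volume ξ₀ ξ := by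
    apply ContinuousOn.intervalIntegrable
    rw [hIcc]
    intro s hs
    apply ContinuousAt.continuousWithinAt
    exact ((continuousAt_id.pow 2).inv₀ (pow_ne_zero 2 (hpos s hs).ne')).const_mul _
  have habs_int : IntervalIntegrable (fun s => |u' s * v s|) MeasureTheory.volume ξ₀ ξ := by
    apply ContinuousOn.intervalIntegrable
    rw [hIcc]
    intro s hs
    have hs0 := hpos s hs
    apply ContinuousAt.continuousWithinAt
    apply ContinuousAt.abs
    exact (hu'cont s hs0).mul
      ((Real.continuous_cos.continuousAt.comp (hφderiv s hs0).continuousAt)).neg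
  have hsqval : (∫ s in ξ₀..ξ, (s^2)⁻¹) = ξ₀⁻¹ - ξ⁻¹ := by
    have hderiv : ∀ s ∈ uIcc ξ₀ ξ, HasDerivAt (fun t : ℝ => -t⁻¹) ((s^2)⁻¹) s := by
      intro s hs
      rw [hIcc] at hs
      have hs0 := (hpos s hs).ne'
      have h5 := (hasDerivAt_inv hs0).neg
      simp only [neg_neg] at h5
      exact h5
    have hint : IntervalIntegrable (fun s : ℝ => (s^2)⁻¹) MeasureTheory.volume ξ₀ ξ := by
      apply ContinuousOn.intervalIntegrable
      rw [hIcc]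
      intro s hs
      apply ContinuousAt.continuousWithinAt
      exact (continuousAt_id.pow 2).inv₀ (pow_ne_zero 2 (hpos s hs).ne')
    rw [intervalIntegral.integral_eq_sub_of_hasDerivAt hderiv hint]
    ring
  have hrem : |∫ s in ξ₀..ξ, u' s * v s| ≤ B / |a| * ξ₀⁻¹ := by
    have ha' : (0:ℝ) < |a| := abs_pos.mpr ha
    calc |∫ s in ξ₀..ξ, u' s * v s| ≤ ∫ s in ξ₀..ξ, |u' s * v s| :=
          intervalIntegral.abs_integral_le_integral_abs hle
      _ ≤ ∫ s in ξ₀..ξ, B / |a| * (s^2)⁻¹ := by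
          apply intervalIntegral.integral_mono_on hle habs_int hsqint
          intro s hs
          rw [abs_mul]
          calc |u' s| * |v s| ≤ |u' s| * 1 := by
                have := hvb s; nlinarith [abs_nonneg (u' s)]
            _ = |u' s| := mul_one _
            _ ≤ B / |a| * (s^2)⁻¹ := hu'b s hs
      _ = B / |a| * (ξ₀⁻¹ - ξ⁻¹) := by
          rw [intervalIntegral.integral_const_mul, hsqval]
      _ ≤ B / |a| * ξ₀⁻¹ := by
          have : (0:ℝ) < ξ⁻¹ := by positivity
          have hBa : (0:ℝ) ≤ B / |a| := by positivity
          nlinarith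
  -- final estimate
  have hξi : ξ ∈ Icc ξ₀ ξ := ⟨hle, le_refl _⟩
  have hξ₀i : ξ₀ ∈ Icc ξ₀ ξ := ⟨le_refl _, hle⟩
  have ha' : (0:ℝ) < |a| := abs_pos.mpr ha
  rw [Real.rpow_neg_one]
  have h1 : |u ξ * v ξ| ≤ (|a| * ξ₀)⁻¹ := by
    rw [abs_mul]
    calc |u ξ| * |v ξ| ≤ (|a| * ξ₀)⁻¹ * 1 :=
          mul_le_mul (hub ξ hξi) (hvb ξ) (abs_nonneg _) (by positivity)
      _ = (|a| * ξ₀)⁻¹ := mul_one _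
  have h2 : |u ξ₀ * v ξ₀| ≤ (|a| * ξ₀)⁻¹ := by
    rw [abs_mul]
    calc |u ξ₀| * |v ξ₀| ≤ (|a| * ξ₀)⁻¹ * 1 :=
          mul_le_mul (hub ξ₀ hξ₀i) (hvb ξ₀) (abs_nonneg _) (by positivity)
      _ = (|a| * ξ₀)⁻¹ := mul_one _
  calc |u ξ * v ξ - u ξ₀ * v ξ₀ - ∫ s in ξ₀..ξ, u' s * v s|
      ≤ |u ξ * v ξ - u ξ₀ * v ξ₀| + |∫ s in ξ₀..ξ, u' s * v s| := abs_sub _ _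
    _ ≤ (|a| * ξ₀)⁻¹ + (|a| * ξ₀)⁻¹ + B / |a| * ξ₀⁻¹ := by
        have h3 := abs_sub (u ξ * v ξ) (u ξ₀ * v ξ₀)
        linarith [hrem]
    _ = (2 + B) / |a| * ξ₀⁻¹ := by
        field_simp
        ring
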